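/- Let J, E, E' be ideals of S = K[x_1,...,x_n] with a fixed monomial order such that (J,E) and (J,E') are Gröbner-nice pairs (i.e., in(J+E) = in(J)+in(E) and in(J+E') = in(J)+in(E')). If in((J+E) ∩ (J+E')) = in(J) + in(E ∩ E'), then (J+E) ∩ (J+E') = J + (E ∩ E') and (J, E ∩ E') is a Gröbner-nice pair. -/

import Mathlib

open MvPolynomial

variable {K : Type*} [Field K] {n : ℕ}

/-- The leading monomial (exponent vector) of a polynomial with respect to a monomial
order `m`: the maximum of the support; by convention `lm m 0 = 0`. -/
noncomputable def lm (m : MonomialOrder (Fin n)) (f : MvPolynomial (Fin n) K) :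
    Fin n →₀ ℕ :=
  m.toSyn.symm (f.support.sup fun d => m.toSyn d)

/-- The initial ideal of `I`: the ideal generated by the leading monomials of the
nonzero elements of `I`. -/
noncomputable def initialIdeal (m : MonomialOrder (Fin n))
    (I : Ideal (MvPolynomial (Fin n) K)) : Ideal (MvPolynomial (Fin n) K) :=
  Ideal.span {p | ∃ f ∈ I, f ≠ 0 ∧ p = monomial (lm m f) (1 : K)}

/-- `G` is a Gröbner basis of `I`: a finite set of nonzero polynomials generating `I`
whose leading monomials generate the initial ideal of `I`. -/
def IsGroebnerBasis (m : MonomialOrder (Fin n)) (I : Ideal (MvPolynomial (Fin n) K))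
    (G : Set (MvPolynomial (Fin n) K)) : Prop :=
  G.Finite ∧ (0 : MvPolynomial (Fin n) K) ∉ G ∧ Ideal.span G = I ∧
    Ideal.span ((fun g => monomial (lm m g) (1 : K)) '' G) = initialIdeal m I

/-- The S-polynomial `S(f,g)` with respect to the monomial order `m`. -/
noncomputable def sPoly (m : MonomialOrder (Fin n)) (f g : MvPolynomial (Fin n) K) :
    MvPolynomial (Fin n) K :=
  monomial (lm m f ⊔ lm m g - lm m f) (f.coeff (lm m f))⁻¹ * f -
    monomial (lm m f ⊔ lm m g - lm m g) (g.coeff (lm m g))⁻¹ * g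

/-- An ideal is a monomial ideal if it is generated by monomials. -/
def IsMonomialIdeal (I : Ideal (MvPolynomial (Fin n) K)) : Prop :=
  ∃ M : Set (Fin n →₀ ℕ), I = Ideal.span ((fun μ => (monomial μ (1 : K))) '' M)

lemma lm_mem_support (m : MonomialOrder (Fin n)) {f : MvPolynomial (Fin n) K} (hf : f ≠ 0) :
    lm m f ∈ f.support := by
  obtain ⟨d, hd, hsup⟩ := Finset.exists_mem_eq_sup f.support
    (by simpa using hf) (fun d => m.toSyn d)
  simpa [lm, hsup] using hd

lemma le_toSyn_lm (m : MonomialOrder (Fin n)) {f : MvPolynomial (Fin n) K} {d : Fin n →₀ ℕ}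
    (hd : d ∈ f.support) : m.toSyn d ≤ m.toSyn (lm m f) := by
  simpa [lm] using Finset.le_sup (f := fun d => m.toSyn d) hd

lemma reduce_lt (m : MonomialOrder (Fin n)) {f g : MvPolynomial (Fin n) K}
    (hg : g ≠ 0) (hle : lm m g ≤ lm m f) :
    ∀ d ∈ (f - monomial (lm m f - lm m g)
        (f.coeff (lm m f) / g.coeff (lm m g)) * g).support,
      m.toSyn d < m.toSyn (lm m f) := by
  set δ := lm m f - lm m g with hδ
  set c := f.coeff (lm m f) / g.coeff (lm m g) with hc
  intro d hd
  rw [MvPolynomial.mem_support_iff] at hd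
  have hb : g.coeff (lm m g) ≠ 0 := by
    simpa [MvPolynomial.mem_support_iff] using lm_mem_support m hg
  have hδg : δ + lm m g = lm m f := tsub_add_cancel_of_le hle
  have hzero : (f - monomial δ c * g).coeff (lm m f) = 0 := by
    have h1 : (monomial δ c * g).coeff (lm m f) = f.coeff (lm m f) := by
      rw [coeff_monomial_mul', if_pos (le_trans tsub_le_self (le_of_eq rfl))]
      · have : lm m f - δ = lm m g := by
          rw [hδ]; exact tsub_tsub_cancel_of_le hle
        rw [this, hc, div_mul_cancel₀ _ hb]
    simp [MvPolynomial.coeff_sub, h1]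
  have hne : d ≠ lm m f := by
    intro hdeq; rw [hdeq] at hd; exact hd hzero
  have hle' : m.toSyn d ≤ m.toSyn (lm m f) := by
    by_cases hdf : f.coeff d ≠ 0
    · exact le_toSyn_lm m (MvPolynomial.mem_support_iff.mpr hdf)
    · push_neg at hdf
      have hq : (monomial δ c * g).coeff d ≠ 0 := by
        intro h0
        apply hd
        simp [MvPolynomial.coeff_sub, hdf, h0]
      rw [coeff_monomial_mul'] at hq
      by_cases hδd : δ ≤ d
      · rw [if_pos hδd] at hq
        have hgd : d - δ ∈ g.support := by
          rw [MvPolynomial.mem_support_iff]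
          intro h0; apply hq; rw [h0, mul_zero]
        have := le_toSyn_lm m hgd
        calc m.toSyn d = m.toSyn (δ + (d - δ)) := by
              rw [add_tsub_cancel_of_le hδd]
          _ = m.toSyn δ + m.toSyn (d - δ) := by rw [map_add]
          _ ≤ m.toSyn δ + m.toSyn (lm m g) := by exact add_le_add le_rfl this
          _ = m.toSyn (δ + lm m g) := by rw [map_add]
          _ = m.toSyn (lm m f) := by rw [hδg]
      · rw [if_neg hδd] at hq; exact absurd rfl hq
  exact lt_of_le_of_ne hle' (fun h => hne (m.toSyn.injective h))

lemma initialIdeal_eq_span_image (m : MonomialOrder (Fin n)) (I : Ideal (MvPolynomial (Fin n) K)) :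
    initialIdeal m I = Ideal.span ((fun μ => monomial μ (1 : K)) ''
      {μ | ∃ g ∈ I, g ≠ 0 ∧ lm m g = μ}) := by
  unfold initialIdeal
  congr 1
  ext p
  constructor
  · rintro ⟨f, hf, hf0, rfl⟩; exact ⟨lm m f, ⟨f, hf, hf0, rfl⟩, rfl⟩
  · rintro ⟨μ, ⟨g, hg, hg0, rfl⟩, rfl⟩; exact ⟨g, hg, hg0, rfl⟩

lemma initialIdeal_mono (m : MonomialOrder (Fin n)) {I I' : Ideal (MvPolynomial (Fin n) K)}
    (hle : I ≤ I') : initialIdeal m I ≤ initialIdeal m I' := by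
  apply Ideal.span_mono
  rintro p ⟨f, hf, hf0, rfl⟩
  exact ⟨f, hle hf, hf0, rfl⟩

lemma le_of_initial_le (m : MonomialOrder (Fin n)) {I I' : Ideal (MvPolynomial (Fin n) K)}
    (hle : I ≤ I') (hin : initialIdeal m I' ≤ initialIdeal m I) : I' ≤ I := by
  have H : ∀ s : m.syn, ∀ f, f ∈ I' → m.toSyn (lm m f) = s → f ∈ I := by
    intro s
    induction s using WellFoundedLT.induction with
    | _ s IH =>
      intro f hf hfs
      by_cases hf0 : f = 0
      · rw [hf0]; exact zero_mem I
      have hmem : (monomial (lm m f) (1 : K)) ∈ initialIdeal m I :=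
        hin (Ideal.subset_span ⟨f, hf, hf0, rfl⟩)
      rw [initialIdeal_eq_span_image, mem_ideal_span_monomial_image] at hmem
      obtain ⟨μ, ⟨g, hg, hg0, rfl⟩, hμle⟩ := hmem (lm m f)
        (by simp [MvPolynomial.support_monomial])
      set t := monomial (lm m f - lm m g)
        (f.coeff (lm m f) / g.coeff (lm m g)) * g with ht
      have htI : t ∈ I := Ideal.mul_mem_left _ _ hg
      have hfeq : f = (f - t) + t := by ring
      by_cases hft : f - t = 0
      · rw [hfeq, hft, zero_add]; exact htI
      · have hlt : m.toSyn (lm m (f - t)) < s := by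
          rw [← hfs]
          exact reduce_lt m hg0 hμle _ (lm_mem_support m hft)
        have hsub : f - t ∈ I := IH _ hlt _ (Ideal.sub_mem I' hf (hle htI)) rfl
        rw [hfeq]; exact Ideal.add_mem I hsub htI
  intro f hf
  exact H _ f hf rfl

/-- If `(J,E)` and `(J,E')` are Gröbner-nice pairs and
`in((J+E) ∩ (J+E')) = in(J) + in(E ∩ E')`, then `(J+E) ∩ (J+E') = J + (E ∩ E')` and
`(J, E ∩ E')` is a Gröbner-nice pair. -/
theorem stmt10 (m : MonomialOrder (Fin n)) (J E E' : Ideal (MvPolynomial (Fin n) K))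
    (hE : initialIdeal m (J + E) = initialIdeal m J + initialIdeal m E)
    (hE' : initialIdeal m (J + E') = initialIdeal m J + initialIdeal m E')
    (h : initialIdeal m ((J + E) ⊓ (J + E')) =
      initialIdeal m J + initialIdeal m (E ⊓ E')) :
    (J + E) ⊓ (J + E') = J + (E ⊓ E') ∧
      initialIdeal m (J + (E ⊓ E')) = initialIdeal m J + initialIdeal m (E ⊓ E') := by
  have mono := fun {A B : Ideal (MvPolynomial (Fin n) K)} (hAB : A ≤ B) =>
    initialIdeal_mono m hAB
  have h1 : J + (E ⊓ E') ≤ (J + E) ⊓ (J + E') := by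
    rw [Ideal.add_eq_sup, Ideal.add_eq_sup, Ideal.add_eq_sup]
    exact le_inf (sup_le_sup_left inf_le_left J) (sup_le_sup_left inf_le_right J)
  have h2 : initialIdeal m J + initialIdeal m (E ⊓ E') ≤ initialIdeal m (J + (E ⊓ E')) := by
    rw [Ideal.add_eq_sup]
    refine sup_le (mono ?_) (mono ?_)
    · rw [Ideal.add_eq_sup]; exact le_sup_left
    · rw [Ideal.add_eq_sup]; exact le_sup_right
  have h3 : initialIdeal m (J + (E ⊓ E')) ≤ initialIdeal m J + initialIdeal m (E ⊓ E') := by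
    rw [← h]; exact mono h1
  have hinit : initialIdeal m (J + (E ⊓ E')) = initialIdeal m J + initialIdeal m (E ⊓ E') :=
    le_antisymm h3 h2
  have hIn : initialIdeal m ((J + E) ⊓ (J + E')) ≤ initialIdeal m (J + (E ⊓ E')) := by
    rw [h, hinit]
  have heq : (J + E) ⊓ (J + E') = J + (E ⊓ E') :=
    le_antisymm (le_of_initial_le m h1 hIn) h1
  exact ⟨heq, hinit⟩
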